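/- Let {Z^ℓ}_{ℓ∈L} be independent Gaussian random variables Z^ℓ ~ N(μ^ℓ, (σ^ℓ)²), let μ ∈ ℝ, and let B = {ℓ ∈ L : μ^ℓ ≠ μ}. Suppose |B| < |L| and let G = |B|/|L| + √(δ/(|L|−|B|)) + 10^{-8}/|L| for some δ ≥ 0. If G < 1/2 − ε for some ε > 0, then with probability at least 1 − 4e^{−2δ}, |median({Z^ℓ}_{ℓ∈L}) − μ| ≤ σ̃·G·C_ε, where σ̃ = max_{ℓ ∈ L∖B} σ^ℓ and C_ε = √(2π)·exp((Φ^{-1}(1−ε))²/2) with Φ the standard normal CDF. -/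

import Mathlib

open MeasureTheory ProbabilityTheory

/-- The median of a list of reals: the middle element of the sorted list
(the average of the two middle elements when the length is even). -/
noncomputable def listMedian (l : List ℝ) : ℝ :=
  let s := l.mergeSort (· ≤ ·)
  if l.length % 2 = 1 then s.getD (l.length / 2) 0
  else (s.getD (l.length / 2 - 1) 0 + s.getD (l.length / 2) 0) / 2

/-- The sample median of finitely many reals. -/
noncomputable def sampleMedian {ι : Type*} [Fintype ι] (f : ι → ℝ) : ℝ :=
  listMedian (Finset.univ.val.toList.map f)

/-- The cumulative distribution function of the standard normal distribution. -/
noncomputable def stdGaussianCDF (x : ℝ) : ℝ :=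
  ((gaussianReal 0 1) (Set.Iic x)).toReal

/-- The quantile function `Φ⁻¹` of the standard normal distribution. -/
noncomputable def stdGaussianQuantile (p : ℝ) : ℝ :=
  sInf {x : ℝ | p ≤ stdGaussianCDF x}

section AuxHoeffding
open Real MeasureTheory ProbabilityTheory


lemma bernoulli_mgf_le {p : ℝ} (hp0 : 0 ≤ p) (hp1 : p ≤ 1) (x : ℝ) :
    1 - p + p * exp x ≤ exp (p * x + x ^ 2 / 8) := by
  have hF : ∀ y : ℝ, 0 < 1 - p + p * exp y := by
    intro y
    rcases eq_or_lt_of_le hp0 with h | h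
    · simp [← h]
    · nlinarith [exp_pos y]
  set f : ℝ → ℝ := fun y => p * y + y ^ 2 / 8 - Real.log (1 - p + p * exp y) with hf
  set fp : ℝ → ℝ := fun y => p + y / 4 - p * exp y / (1 - p + p * exp y) with hfp
  have hFd : ∀ y : ℝ, HasDerivAt (fun y => 1 - p + p * exp y) (p * exp y) y := by
    intro y
    exact ((Real.hasDerivAt_exp y).const_mul p).const_add (1 - p)
  have hd : ∀ y : ℝ, HasDerivAt f (fp y) y := by
    intro y
    have h2 : HasDerivAt (fun y => Real.log (1 - p + p * exp y))
        (p * exp y / (1 - p + p * exp y)) y := (hFd y).log (hF y).ne'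
    have h3 : HasDerivAt (fun y : ℝ => p * y + y ^ 2 / 8) (p + y / 4) y := by
      have := ((hasDerivAt_id y).const_mul p).add ((hasDerivAt_pow 2 y).div_const 8)
      exact this.congr_deriv (by norm_num; ring)
    exact (h3.sub h2)
  have hfp0 : fp 0 = 0 := by simp [hfp]
  have hdp : ∀ y : ℝ, HasDerivAt fp
      (1 / 4 - (p * exp y * (1 - p + p * exp y) - p * exp y * (p * exp y))
        / (1 - p + p * exp y) ^ 2) y := by
    intro y
    have h1 : HasDerivAt (fun y => p * exp y) (p * exp y) y :=
      (Real.hasDerivAt_exp y).const_mul p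
    have h2 : HasDerivAt (fun y => p * exp y / (1 - p + p * exp y))
        ((p * exp y * (1 - p + p * exp y) - p * exp y * (p * exp y))
          / (1 - p + p * exp y) ^ 2) y := h1.div (hFd y) (hF y).ne'
    have h3 : HasDerivAt (fun y : ℝ => p + y / 4) (1 / 4) y := by
      simpa using ((hasDerivAt_id y).div_const 4).const_add p
    exact h3.sub h2
  have hfpmono : Monotone fp := by
    apply monotone_of_deriv_nonneg
    · exact fun y => (hdp y).differentiableAt
    · intro y
      rw [(hdp y).deriv]
      have h1 := hF y
      have h2 := exp_pos y
      rw [sub_nonneg, div_le_iff₀ (by positivity)]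
      nlinarith [sq_nonneg (1 - p - p * exp y)]
  have hf0 : f 0 = 0 := by simp [hf]
  have key : ∀ y : ℝ, 0 ≤ f y := by
    intro y
    rcases le_total 0 y with h | h
    · have hmono : MonotoneOn f (Set.Ici 0) := by
        apply monotoneOn_of_deriv_nonneg (convex_Ici 0)
        · exact (fun y _ => (hd y).differentiableAt.continuousAt.continuousWithinAt)
        · exact fun y _ => (hd y).differentiableAt.differentiableWithinAt
        · intro y hy
          rw [(hd y).deriv, ← hfp0]
          exact hfpmono (le_of_lt (by simpa using hy))
      have := hmono Set.self_mem_Ici h h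
      rwa [hf0] at this
    · have hanti : AntitoneOn f (Set.Iic 0) := by
        apply antitoneOn_of_deriv_nonpos (convex_Iic 0)
        · exact (fun y _ => (hd y).differentiableAt.continuousAt.continuousWithinAt)
        · exact fun y _ => (hd y).differentiableAt.differentiableWithinAt
        · intro y hy
          rw [(hd y).deriv, ← hfp0]
          exact hfpmono (le_of_lt (by simpa using hy))
      have := hanti h Set.self_mem_Iic h
      rwa [hf0] at this
  have := key x
  rw [hf, sub_nonneg] at this
  calc 1 - p + p * exp x = exp (Real.log (1 - p + p * exp x)) := (exp_log (hF x)).symm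
    _ ≤ exp (p * x + x ^ 2 / 8) := exp_le_exp.2 this


lemma chernoff01 {Ω : Type*} [MeasureSpace Ω] [IsProbabilityMeasure (ℙ : Measure Ω)]
    {ι : Type*} (Y : ι → Ω → ℝ) (hYm : ∀ i, Measurable (Y i))
    (hindep : iIndepFun Y ℙ)
    (h01 : ∀ i ω, Y i ω = 0 ∨ Y i ω = 1)
    (F : Finset ι) (hF : 0 < F.card) (p r : ℝ)
    (hp0 : 0 ≤ p) (hp1 : p ≤ 1) (hr : 0 ≤ r)
    (hmean : ∀ i ∈ F, ∫ ω, Y i ω ∂ℙ ≤ p) :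
    (ℙ {ω | F.card * p + r ≤ ∑ i ∈ F, Y i ω}).toReal
      ≤ Real.exp (-2 * r ^ 2 / F.card) := by
  have hn : (0:ℝ) < F.card := by exact_mod_cast hF
  set lam : ℝ := 4 * r / F.card with hlam
  have hlam0 : 0 ≤ lam := by positivity
  -- rewrite exp (lam * Y i ω)
  have hexp_eq : ∀ i, (fun ω => exp (lam * Y i ω)) =
      fun ω => 1 + (exp lam - 1) * Y i ω := by
    intro i
    funext ω
    rcases h01 i ω with h | h <;> simp [h]
  have hYint : ∀ i, Integrable (Y i) ℙ := by
    intro i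
    refine Integrable.mono' (integrable_const 1) (hYm i).aestronglyMeasurable ?_
    filter_upwards with ω
    rcases h01 i ω with h | h <;> simp [h]
  have hint : ∀ i, Integrable (fun ω => exp (lam * Y i ω)) ℙ := by
    intro i
    rw [hexp_eq i]
    exact (integrable_const 1).add ((hYint i).const_mul _)
  have hYnn : ∀ i, 0 ≤ ∫ ω, Y i ω ∂ℙ := by
    intro i
    apply integral_nonneg
    intro ω
    rcases h01 i ω with h | h <;> simp [h]
  -- mgf bound for each i
  have hmgf : ∀ i ∈ F, mgf (Y i) ℙ lam ≤ exp (p * lam + lam ^ 2 / 8) := by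
    intro i hi
    have : mgf (Y i) ℙ lam = 1 + (exp lam - 1) * ∫ ω, Y i ω ∂ℙ := by
      rw [mgf, hexp_eq i, integral_add (integrable_const 1) ((hYint i).const_mul _),
        integral_const, integral_const_mul]
      simp
    rw [this]
    have h1 : (exp lam - 1) * ∫ ω, Y i ω ∂ℙ ≤ (exp lam - 1) * p := by
      apply mul_le_mul_of_nonneg_left (hmean i hi)
      simp [Real.one_le_exp_iff, hlam0]
    calc 1 + (exp lam - 1) * ∫ ω, Y i ω ∂ℙ ≤ 1 + (exp lam - 1) * p := by linarith
      _ = 1 - p + p * exp lam := by ring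
      _ ≤ exp (p * lam + lam ^ 2 / 8) := bernoulli_mgf_le hp0 hp1 lam
  -- Chernoff
  have hsum : {ω | F.card * p + r ≤ ∑ i ∈ F, Y i ω}
      = {ω | F.card * p + r ≤ (∑ i ∈ F, Y i) ω} := by
    ext ω; simp [Finset.sum_apply]
  rw [hsum]
  have hintsum : Integrable (fun ω => exp (lam * (∑ i ∈ F, Y i) ω)) ℙ :=
    hindep.integrable_exp_mul_sum hYm (fun i _ => hint i)
  have hcher := measure_ge_le_exp_mul_mgf (F.card * p + r) hlam0 hintsum
  refine hcher.trans ?_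
  rw [hindep.mgf_sum hYm F]
  have hprod : ∏ i ∈ F, mgf (Y i) ℙ lam ≤ exp (F.card * (p * lam + lam ^ 2 / 8)) := by
    calc ∏ i ∈ F, mgf (Y i) ℙ lam ≤ ∏ i ∈ F, exp (p * lam + lam ^ 2 / 8) :=
          Finset.prod_le_prod (fun i _ => mgf_nonneg) (fun i hi => hmgf i hi)
      _ = exp (F.card * (p * lam + lam ^ 2 / 8)) := by
          rw [Finset.prod_const, ← Real.exp_nat_mul]
  calc exp (-lam * (F.card * p + r)) * ∏ i ∈ F, mgf (Y i) ℙ lam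
      ≤ exp (-lam * (F.card * p + r)) * exp (F.card * (p * lam + lam ^ 2 / 8)) := by
        apply mul_le_mul_of_nonneg_left hprod (le_of_lt (exp_pos _))
    _ = exp (-lam * (F.card * p + r) + F.card * (p * lam + lam ^ 2 / 8)) := by
        rw [← Real.exp_add]
    _ = exp (-2 * r ^ 2 / F.card) := by
        congr 1
        rw [hlam]
        field_simp
        ring

end AuxHoeffding

section AuxList

lemma sorted_count_high {l : List ℝ} (hs : List.Pairwise (· ≤ ·) l) {j : ℕ}
    (hj : j < l.length) {c : ℝ} (hc : c < l.getD j 0) :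
    l.length - j ≤ l.countP (fun x => decide (c < x)) := by
  rw [List.getD_eq_getElem l 0 hj] at hc
  have hdrop : (l.drop j).countP (fun x => decide (c < x)) = (l.drop j).length := by
    rw [List.countP_eq_length]
    intro a ha
    obtain ⟨i, hi, rfl⟩ := List.getElem_of_mem ha
    have hji : j + i < l.length := by
      have := hi; rw [List.length_drop] at this; omega
    rw [List.getElem_drop]
    simp only [decide_eq_true_eq]
    rcases Nat.eq_zero_or_pos i with h0 | h0
    · subst h0; simpa using hc
    · have : l[j] ≤ l[j + i]'hji :=
        List.pairwise_iff_getElem.1 hs j (j+i) hj hji (by omega)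
      exact lt_of_lt_of_le hc this
  have hsplit := List.countP_append (p := fun x => decide (c < x)) (l₁ := l.take j) (l₂ := l.drop j)
  rw [List.take_append_drop] at hsplit
  have hld : (l.drop j).length = l.length - j := List.length_drop
  omega

lemma sorted_count_low {l : List ℝ} (hs : List.Pairwise (· ≤ ·) l) {j : ℕ}
    (hj : j < l.length) {c : ℝ} (hc : l.getD j 0 < c) :
    j + 1 ≤ l.countP (fun x => decide (x < c)) := by
  rw [List.getD_eq_getElem l 0 hj] at hc
  have htake : (l.take (j+1)).countP (fun x => decide (x < c)) = (l.take (j+1)).length := by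
    rw [List.countP_eq_length]
    intro a ha
    obtain ⟨i, hi, rfl⟩ := List.getElem_of_mem ha
    have hil : i < j + 1 := by
      have := hi; rw [List.length_take] at this; omega
    rw [List.getElem_take]
    simp only [decide_eq_true_eq]
    rcases Nat.lt_or_ge i j with h0 | h0
    · have : l[i]'(by omega) ≤ l[j] := List.pairwise_iff_getElem.1 hs i j (by omega) hj h0
      exact lt_of_le_of_lt this hc
    · have : i = j := by omega
      subst this; exact hc
  have hlen : (l.take (j+1)).length = j + 1 := by
    rw [List.length_take]; omega
  have hsplit := List.countP_append (p := fun x => decide (x < c)) (l₁ := l.take (j+1)) (l₂ := l.drop (j+1))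
  rw [List.take_append_drop] at hsplit
  omega

lemma mergeSort_sorted (l : List ℝ) : List.Pairwise (· ≤ ·) (l.mergeSort (· ≤ ·)) := by
  have := List.pairwise_mergeSort (le := fun a b : ℝ => decide (a ≤ b))
    (fun a b c hab hbc => by simp only [decide_eq_true_eq] at *; exact le_trans hab hbc)
    (fun a b => by simp only [Bool.or_eq_true, decide_eq_true_eq]; exact le_total a b) l
  exact this.imp (fun h => by simpa using h)

lemma median_count_high {l : List ℝ} {c : ℝ} (h : c < listMedian l) :
    l.length ≤ 2 * l.countP (fun x => decide (c < x)) := by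
  rcases Nat.eq_zero_or_pos l.length with h0 | h0
  · simp [h0]
  have hsl : (l.mergeSort (· ≤ ·)).length = l.length := List.length_mergeSort l
  have hsorted := mergeSort_sorted l
  have hcount : (l.mergeSort (· ≤ ·)).countP (fun x => decide (c < x))
      = l.countP (fun x => decide (c < x)) := (List.mergeSort_perm l _).countP_eq _
  unfold listMedian at h
  by_cases hpar : l.length % 2 = 1
  · rw [if_pos hpar] at h
    have hj : l.length / 2 < (l.mergeSort (· ≤ ·)).length := by omega
    have hcb := sorted_count_high hsorted hj h
    rw [hcount, hsl] at hcb
    omega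
  · rw [if_neg hpar] at h
    have h2 : 2 ≤ l.length := by omega
    have hj1 : l.length / 2 - 1 < (l.mergeSort (· ≤ ·)).length := by omega
    have hj2 : l.length / 2 < (l.mergeSort (· ≤ ·)).length := by omega
    have hab : (l.mergeSort (· ≤ ·)).getD (l.length / 2 - 1) 0
        ≤ (l.mergeSort (· ≤ ·)).getD (l.length / 2) 0 := by
      rw [List.getD_eq_getElem _ 0 hj1, List.getD_eq_getElem _ 0 hj2]
      exact List.pairwise_iff_getElem.1 hsorted _ _ hj1 hj2 (by omega)
    have hb : c < (l.mergeSort (· ≤ ·)).getD (l.length / 2) 0 := by linarith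
    have hcb := sorted_count_high hsorted hj2 hb
    rw [hcount, hsl] at hcb
    omega

lemma median_count_low {l : List ℝ} {c : ℝ} (h : listMedian l < c) :
    l.length ≤ 2 * l.countP (fun x => decide (x < c)) := by
  rcases Nat.eq_zero_or_pos l.length with h0 | h0
  · simp [h0]
  have hsl : (l.mergeSort (· ≤ ·)).length = l.length := List.length_mergeSort l
  have hsorted := mergeSort_sorted l
  have hcount : (l.mergeSort (· ≤ ·)).countP (fun x => decide (x < c))
      = l.countP (fun x => decide (x < c)) := (List.mergeSort_perm l _).countP_eq _
  unfold listMedian at h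
  by_cases hpar : l.length % 2 = 1
  · rw [if_pos hpar] at h
    have hj : l.length / 2 < (l.mergeSort (· ≤ ·)).length := by omega
    have hcb := sorted_count_low hsorted hj h
    rw [hcount] at hcb
    omega
  · rw [if_neg hpar] at h
    have h2 : 2 ≤ l.length := by omega
    have hj1 : l.length / 2 - 1 < (l.mergeSort (· ≤ ·)).length := by omega
    have hj2 : l.length / 2 < (l.mergeSort (· ≤ ·)).length := by omega
    have hab : (l.mergeSort (· ≤ ·)).getD (l.length / 2 - 1) 0
        ≤ (l.mergeSort (· ≤ ·)).getD (l.length / 2) 0 := by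
      rw [List.getD_eq_getElem _ 0 hj1, List.getD_eq_getElem _ 0 hj2]
      exact List.pairwise_iff_getElem.1 hsorted _ _ hj1 hj2 (by omega)
    have ha : (l.mergeSort (· ≤ ·)).getD (l.length / 2 - 1) 0 < c := by linarith
    have hcb := sorted_count_low hsorted hj1 ha
    rw [hcount] at hcb
    omega

end AuxList

section AuxGaussian
open MeasureTheory ProbabilityTheory Filter Set Real

lemma stdGaussianCDF_eq_cdf : stdGaussianCDF = ⇑(cdf (gaussianReal 0 1)) := by
  funext x
  rw [stdGaussianCDF, cdf_eq_real, measureReal_def]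

lemma std_singleton (x : ℝ) : gaussianReal 0 1 {x} = 0 :=
  (gaussianReal_absolutelyContinuous 0 one_ne_zero) Real.volume_singleton

lemma std_map_neg : Measure.map (fun x => -1 * x) (gaussianReal 0 1) = gaussianReal 0 1 := by
  rw [gaussianReal_map_const_mul (-1 : ℝ)]
  congr 1
  · norm_num
  · ext
    norm_num

lemma stdGaussianCDF_mono : Monotone stdGaussianCDF := by
  rw [stdGaussianCDF_eq_cdf]
  exact monotone_cdf _

lemma std_Iic_neg (a : ℝ) : gaussianReal 0 1 (Set.Iic (-a)) = gaussianReal 0 1 (Set.Ici a) := by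
  conv_lhs => rw [← std_map_neg]
  rw [Measure.map_apply (by fun_prop) measurableSet_Iic]
  congr 1
  ext x
  simp only [Set.mem_preimage, Set.mem_Iic, Set.mem_Ici]
  constructor <;> intro h <;> linarith

lemma std_Ioi_eq_Ici (a : ℝ) : gaussianReal 0 1 (Set.Ioi a) = gaussianReal 0 1 (Set.Ici a) :=
  measure_congr (Ioi_ae_eq_Ici' (std_singleton a))

lemma std_Iio_eq_Iic (a : ℝ) : gaussianReal 0 1 (Set.Iio a) = gaussianReal 0 1 (Set.Iic a) :=
  measure_congr (Iio_ae_eq_Iic' (std_singleton a))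

lemma stdGaussianCDF_zero : stdGaussianCDF 0 = 1/2 := by
  have h1 : gaussianReal 0 1 (Set.Ici (0:ℝ)) = gaussianReal 0 1 (Set.Iic (0:ℝ)) := by
    have := std_Iic_neg 0
    simpa using this.symm
  have h2 : gaussianReal 0 1 (Set.Iic (0:ℝ)) + gaussianReal 0 1 (Set.Ioi (0:ℝ)) = 1 := by
    rw [← Set.compl_Iic, prob_compl_eq_one_sub measurableSet_Iic]
    rw [add_tsub_cancel_of_le prob_le_one]
  rw [std_Ioi_eq_Ici, h1] at h2
  have h3 := congrArg ENNReal.toReal h2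
  rw [ENNReal.toReal_add (measure_ne_top _ _) (measure_ne_top _ _)] at h3
  simp only [ENNReal.toReal_one] at h3
  rw [stdGaussianCDF]
  linarith

lemma stdGaussianCDF_quantile_ge {p : ℝ} (hp0 : 0 < p) (hp1 : p < 1) :
    p ≤ stdGaussianCDF (stdGaussianQuantile p) := by
  rw [stdGaussianQuantile, stdGaussianCDF_eq_cdf]
  set F := cdf (gaussianReal 0 1) with hF
  set S := {x : ℝ | p ≤ (F : ℝ → ℝ) x} with hSdef
  have hne : S.Nonempty := by
    have h := (tendsto_cdf_atTop (gaussianReal 0 1)).eventually (eventually_ge_nhds hp1)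
    exact h.exists
  have hbdd : BddBelow S := by
    have h := (tendsto_cdf_atBot (gaussianReal 0 1)).eventually (eventually_lt_nhds hp0)
    obtain ⟨x₀, hx₀⟩ := eventually_atBot.1 h
    refine ⟨x₀, fun x hx => ?_⟩
    by_contra hcon
    push_neg at hcon
    exact absurd hx (not_le.2 (hx₀ x hcon.le))
  have hev : ∀ᶠ y in nhdsWithin (sInf S) (Set.Ioi (sInf S)), p ≤ F y := by
    refine Filter.eventually_of_mem self_mem_nhdsWithin (fun y hy => ?_)
    obtain ⟨b, hbS, hby⟩ := (csInf_lt_iff hbdd hne).1 hy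
    exact le_trans hbS (monotone_cdf _ hby.le)
  have hcont : Tendsto F (nhdsWithin (sInf S) (Set.Ioi (sInf S))) (nhds (F (sInf S))) :=
    ((F.right_continuous (sInf S)).tendsto).mono_left (nhdsWithin_mono _ Set.Ioi_subset_Ici_self)
  exact ge_of_tendsto hcont hev

lemma stdGaussianCDF_lb {x q : ℝ} (hx : 0 ≤ x) (hxq : x ≤ q) :
    1/2 + x * (Real.exp (-q^2/2) / Real.sqrt (2*Real.pi)) ≤ stdGaussianCDF x := by
  have hsplit : gaussianReal 0 1 (Set.Iic x)
      = gaussianReal 0 1 (Set.Iic 0) + gaussianReal 0 1 (Set.Ioc 0 x) := by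
    rw [← measure_union (Set.Iic_disjoint_Ioc le_rfl) measurableSet_Ioc, Set.Iic_union_Ioc_eq_Iic hx]
  have hnn : ∀ y ∈ Set.Ioc 0 x, Real.exp (-q^2/2) / Real.sqrt (2*Real.pi) ≤ gaussianPDFReal 0 1 y := by
    intro y hy
    rw [gaussianPDFReal_def]
    simp only
    rw [div_eq_inv_mul]
    have h2 : ((1:NNReal):ℝ) = (1:ℝ) := rfl
    rw [h2]
    have : -(y - 0)^2 / (2*(1:ℝ)) = -y^2/2 := by ring
    rw [this, mul_one]
    apply mul_le_mul_of_nonneg_left _ (by positivity)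
    apply Real.exp_le_exp.2
    have h1 := hy.1
    have h2 := hy.2
    nlinarith
  have hint : IntegrableOn (gaussianPDFReal 0 1) (Set.Ioc 0 x) volume :=
    (integrable_gaussianPDFReal 0 1).integrableOn
  have hlb := setIntegral_ge_of_const_le measurableSet_Ioc
    (by rw [Real.volume_Ioc]; exact ENNReal.ofReal_ne_top) hnn hint
  have hvol : (volume (Set.Ioc (0:ℝ) x)).toReal = x := by
    rw [Real.volume_Ioc, ENNReal.toReal_ofReal (by linarith), sub_zero]
  rw [measureReal_def, hvol] at hlb
  have hIoc : (gaussianReal 0 1 (Set.Ioc 0 x)).toReal = ∫ y in Set.Ioc 0 x, gaussianPDFReal 0 1 y := by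
    rw [gaussianReal_apply_eq_integral 0 one_ne_zero]
    rw [ENNReal.toReal_ofReal]
    exact setIntegral_nonneg measurableSet_Ioc (fun y _ => gaussianPDFReal_nonneg 0 1 y)
  have htot : stdGaussianCDF x = stdGaussianCDF 0 + (gaussianReal 0 1 (Set.Ioc 0 x)).toReal := by
    rw [stdGaussianCDF, stdGaussianCDF, hsplit,
      ENNReal.toReal_add (measure_ne_top _ _) (measure_ne_top _ _)]
  rw [htot, stdGaussianCDF_zero, hIoc]
  have : Real.exp (-q^2/2) / Real.sqrt (2*Real.pi) * x ≤ ∫ y in Set.Ioc 0 x, gaussianPDFReal 0 1 y := by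
    rw [smul_eq_mul] at hlb; linarith
  linarith [this]

lemma Phi_ge {G ε : ℝ} (hG0 : 0 ≤ G) (hGe : G < 1/2 - ε) (hε : 0 < ε) {x : ℝ}
    (hx : G * (Real.sqrt (2*Real.pi) * Real.exp ((stdGaussianQuantile (1-ε))^2/2)) ≤ x) :
    1/2 + G ≤ stdGaussianCDF x := by
  set q := stdGaussianQuantile (1-ε) with hq
  set x₀ : ℝ := G * (Real.sqrt (2*Real.pi) * Real.exp (q^2/2)) with hx₀
  have hpi : (0:ℝ) < Real.sqrt (2*Real.pi) := Real.sqrt_pos.2 (by positivity)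
  have hx₀0 : 0 ≤ x₀ := by positivity
  by_cases hcase : x₀ ≤ q
  · have hlb := stdGaussianCDF_lb hx₀0 hcase
    have hkey : x₀ * (Real.exp (-q^2/2) / Real.sqrt (2*Real.pi)) = G := by
      have hE : Real.exp (q^2/2) * Real.exp (-q^2/2) = 1 := by
        rw [← Real.exp_add, show q^2/2 + -q^2/2 = 0 by ring, Real.exp_zero]
      rw [hx₀]
      field_simp
      rw [neg_div] at hE
      linear_combination G * hE
    rw [hkey] at hlb
    exact hlb.trans (stdGaussianCDF_mono hx)
  · push_neg at hcase
    have hε2 : ε < 1/2 := by linarith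
    have hquant := stdGaussianCDF_quantile_ge (p := 1 - ε) (by linarith) (by linarith)
    have : stdGaussianCDF q ≤ stdGaussianCDF x := stdGaussianCDF_mono (by linarith)
    rw [← hq] at hquant
    linarith

lemma std_Ioi_toReal (a : ℝ) :
    ((gaussianReal 0 1) (Set.Ioi a)).toReal = 1 - stdGaussianCDF a := by
  rw [← Set.compl_Iic, prob_compl_eq_one_sub measurableSet_Iic,
    ENNReal.toReal_sub_of_le prob_le_one ENNReal.one_ne_top]
  simp [stdGaussianCDF]

/-- Both gaussian tails are at most `1/2 - G`. -/
lemma gauss_tails {σ σmax : NNReal} (hσ : σ ≤ σmax) (μc : ℝ) {G ε : ℝ}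
    (hG0 : 0 ≤ G) (hGe : G < 1/2 - ε) (hε : 0 < ε) :
    ((gaussianReal μc (σ^2)) (Set.Ioi (μc + (σmax : ℝ) * G *
        (Real.sqrt (2*Real.pi) * Real.exp ((stdGaussianQuantile (1-ε))^2/2))))).toReal
      ≤ 1/2 - G
    ∧ ((gaussianReal μc (σ^2)) (Set.Iio (μc - (σmax : ℝ) * G *
        (Real.sqrt (2*Real.pi) * Real.exp ((stdGaussianQuantile (1-ε))^2/2))))).toReal
      ≤ 1/2 - G := by
  set Cε : ℝ := Real.sqrt (2*Real.pi) * Real.exp ((stdGaussianQuantile (1-ε))^2/2) with hCe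
  have hCe0 : 0 < Cε := by positivity
  set t₀ : ℝ := (σmax : ℝ) * G * Cε with ht₀
  have ht₀0 : 0 ≤ t₀ := by positivity
  by_cases hσ0 : σ = 0
  · subst hσ0
    have h0 : ((0:NNReal)^2 : NNReal) = 0 := by norm_num
    rw [h0, gaussianReal_zero_var]
    constructor
    · rw [Measure.dirac_apply' _ measurableSet_Ioi]
      have : μc ∉ Set.Ioi (μc + t₀) := by simp; linarith
      rw [Set.indicator_of_notMem this]
      simp
      linarith
    · rw [Measure.dirac_apply' _ measurableSet_Iio]
      have : μc ∉ Set.Iio (μc - t₀) := by simp; linarith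
      rw [Set.indicator_of_notMem this]
      simp
      linarith
  · have hσpos : (0:ℝ) < (σ : ℝ) := by positivity
    have hmap : gaussianReal μc (σ^2)
        = Measure.map (fun x => x + μc) (Measure.map (fun x => (σ:ℝ) * x) (gaussianReal 0 1)) := by
      rw [gaussianReal_map_const_mul ((σ:ℝ)), gaussianReal_map_add_const]
      congr 1
      · ring
      · ext
        push_cast
        ring
    have ha : G * Cε ≤ t₀ / (σ:ℝ) := by
      rw [le_div_iff₀ hσpos, ht₀]
      have : (σ:ℝ) ≤ (σmax:ℝ) := hσ
      nlinarith
    have hPhi : 1/2 + G ≤ stdGaussianCDF (t₀ / (σ:ℝ)) := Phi_ge hG0 hGe hε ha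
    constructor
    · have heq : (gaussianReal μc (σ^2)) (Set.Ioi (μc + t₀))
          = gaussianReal 0 1 (Set.Ioi (t₀ / (σ:ℝ))) := by
        rw [hmap, Measure.map_apply (by fun_prop) measurableSet_Ioi,
          Measure.map_apply (by fun_prop) (by measurability)]
        congr 1
        ext x
        simp only [Set.mem_preimage, Set.mem_Ioi]
        rw [div_lt_iff₀ hσpos]
        constructor <;> intro h <;> linarith [h]
      rw [heq, std_Ioi_toReal]
      linarith
    · have heq : (gaussianReal μc (σ^2)) (Set.Iio (μc - t₀))
          = gaussianReal 0 1 (Set.Iio (-(t₀ / (σ:ℝ)))) := by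
        rw [hmap, Measure.map_apply (by fun_prop) measurableSet_Iio,
          Measure.map_apply (by fun_prop) (by measurability)]
        congr 1
        ext x
        simp only [Set.mem_preimage, Set.mem_Iio]
        rw [lt_neg, div_lt_iff₀ hσpos]
        constructor <;> intro h <;> nlinarith [h]
      rw [heq, std_Iio_eq_Iic, std_Iic_neg, ← std_Ioi_eq_Ici, std_Ioi_toReal]
      linarith

end AuxGaussian

section AuxCount

lemma countP_univ_list {ι : Type*} [Fintype ι] (f : ι → ℝ) (p : ℝ → Prop) [DecidablePred p]
    [DecidablePred fun i => p (f i)] :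
    List.countP (fun x => decide (p x)) ((Finset.univ.val.toList).map f)
      = (Finset.univ.filter (fun i => p (f i))).card := by
  classical
  rw [List.countP_map]
  have h1 : (Finset.univ.filter (fun i => p (f i))).card
      = Multiset.countP (fun i => p (f i)) (Finset.univ.val : Multiset ι) := by
    rw [Finset.card, Finset.filter_val, Multiset.countP_eq_card_filter]
  rw [h1]
  conv_rhs => rw [← Multiset.coe_toList (Finset.univ.val : Multiset ι)]
  rw [Multiset.coe_countP]
  congr 1
  funext b
  simp [Function.comp]

lemma length_univ_list {ι : Type*} [Fintype ι] (f : ι → ℝ) :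
    ((Finset.univ.val.toList).map f).length = Fintype.card ι := by
  rw [List.length_map, Multiset.length_toList]
  rfl


end AuxCount

set_option maxHeartbeats 1000000 in
open Classical in
theorem median_gaussian_concentration
    {Ω : Type*} [MeasureSpace Ω] [IsProbabilityMeasure (ℙ : Measure Ω)]
    {ι : Type*} [Fintype ι] [Nonempty ι]
    (Z : ι → Ω → ℝ) (hmeas : ∀ ℓ, Measurable (Z ℓ))
    (m : ι → ℝ) (s : ι → NNReal)
    (hindep : iIndepFun Z ℙ)
    (hlaw : ∀ ℓ, Measure.map (Z ℓ) ℙ = gaussianReal (m ℓ) ((s ℓ) ^ 2))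
    (μ : ℝ)
    (hB : (Finset.univ.filter fun ℓ => m ℓ ≠ μ).card < Fintype.card ι)
    (δ : ℝ) (hδ : 0 ≤ δ) (ε : ℝ) (hε : 0 < ε)
    (G : ℝ)
    (hG : G = ((Finset.univ.filter fun ℓ => m ℓ ≠ μ).card : ℝ) / Fintype.card ι
        + Real.sqrt (δ / ((Fintype.card ι : ℝ)
            - (Finset.univ.filter fun ℓ => m ℓ ≠ μ).card))
        + (10 : ℝ) ^ (-(8 : ℤ)) / Fintype.card ι)
    (hGsmall : G < 1 / 2 - ε) :
    ENNReal.ofReal (1 - 4 * Real.exp (-2 * δ))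
      ≤ ℙ {ω | |sampleMedian (fun ℓ => Z ℓ ω) - μ|
          ≤ (((Finset.univ.filter fun ℓ => m ℓ = μ).sup s : NNReal) : ℝ) * G
            * (Real.sqrt (2 * Real.pi)
              * Real.exp ((stdGaussianQuantile (1 - ε)) ^ 2 / 2))} := by
  classical
  set BB : Finset ι := Finset.univ.filter (fun ℓ => m ℓ ≠ μ) with hBB
  set Good : Finset ι := Finset.univ.filter (fun ℓ => m ℓ = μ) with hGoodDef
  set q : ℝ := stdGaussianQuantile (1 - ε) with hqdef
  set Cε : ℝ := Real.sqrt (2 * Real.pi) * Real.exp (q ^ 2 / 2) with hCe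
  set σt : ℝ := ((Good.sup s : NNReal) : ℝ) with hσt
  set t₀ : ℝ := σt * G * Cε with ht₀
  -- basic cardinalities
  have hn0 : 0 < Fintype.card ι := Fintype.card_pos
  have hnR : (0:ℝ) < (Fintype.card ι : ℝ) := by exact_mod_cast hn0
  have hnb : Good.card + BB.card = Fintype.card ι := by
    rw [hGoodDef, hBB]
    have := Finset.card_filter_add_card_filter_not
      (s := (Finset.univ : Finset ι)) (p := fun ℓ => m ℓ = μ)
    simpa [ne_eq, Finset.card_univ] using this
  have hGoodpos : 0 < Good.card := by omega
  have hGoodR : (Good.card : ℝ) = (Fintype.card ι : ℝ) - BB.card := by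
    have h := congrArg (Nat.cast : ℕ → ℝ) hnb
    push_cast at h
    linarith
  have hGoodRpos : (0:ℝ) < (Good.card : ℝ) := by exact_mod_cast hGoodpos
  -- G facts
  have hsqrt0 : 0 ≤ Real.sqrt (δ / ((Fintype.card ι : ℝ) - BB.card)) := Real.sqrt_nonneg _
  have hpow : (0:ℝ) ≤ (10:ℝ) ^ (-(8:ℤ)) / Fintype.card ι := by positivity
  have hbG : (BB.card : ℝ) / Fintype.card ι ≤ G := by
    rw [hG]; linarith
  have hG0 : 0 ≤ G := le_trans (by positivity) hbG
  have hb2 : 2 * (BB.card : ℝ) < Fintype.card ι := by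
    have h1 : (BB.card : ℝ) / Fintype.card ι < 1/2 := by linarith
    rw [div_lt_iff₀ hnR] at h1
    linarith
  have hCe0 : 0 < Cε := by rw [hCe]; positivity
  have hσt0 : 0 ≤ σt := by rw [hσt]; positivity
  have ht₀0 : 0 ≤ t₀ := by rw [ht₀]; positivity
  -- threshold
  set r : ℝ := (Good.card : ℝ)
      * Real.sqrt (δ / ((Fintype.card ι : ℝ) - BB.card)) with hrdef
  have hr0 : 0 ≤ r := by rw [hrdef]; positivity
  have hbhalf : (BB.card : ℝ)/2
      ≤ (Good.card : ℝ) * ((BB.card : ℝ) / Fintype.card ι) := by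
    rw [hGoodR, ← mul_div_assoc, div_le_div_iff₀ two_pos hnR]
    have hx : 0 ≤ (BB.card:ℝ) * ((Fintype.card ι : ℝ) - 2*BB.card) :=
      mul_nonneg (Nat.cast_nonneg _) (by linarith)
    nlinarith [hx]
  have hee : 0 ≤ (Good.card : ℝ) * ((10:ℝ)^(-(8:ℤ)) / Fintype.card ι) :=
    mul_nonneg (Nat.cast_nonneg _) hpow
  have hthr : (Good.card : ℝ) * (1/2 - G) + r
      ≤ (Fintype.card ι : ℝ)/2 - BB.card := by
    have hexp : (Good.card : ℝ) * (1/2 - G) + r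
        = (Good.card : ℝ)/2 - (Good.card : ℝ) * ((BB.card : ℝ) / Fintype.card ι)
          - (Good.card : ℝ) * ((10:ℝ)^(-(8:ℤ)) / Fintype.card ι) := by
      rw [hG, hrdef]; ring
    rw [hexp]
    linarith [hGoodR]
  -- indicator variables
  set cp : ℝ := μ + t₀ with hcp
  set cm : ℝ := μ - t₀ with hcm
  set Yp : ι → Ω → ℝ := fun i ω => (Set.Ioi cp).indicator (fun _ => (1:ℝ)) (Z i ω) with hYp
  set Ym : ι → Ω → ℝ := fun i ω => (Set.Iio cm).indicator (fun _ => (1:ℝ)) (Z i ω) with hYmdef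
  have hYpm : ∀ i, Measurable (Yp i) :=
    fun i => (measurable_const.indicator measurableSet_Ioi).comp (hmeas i)
  have hYmm : ∀ i, Measurable (Ym i) :=
    fun i => (measurable_const.indicator measurableSet_Iio).comp (hmeas i)
  have hYpindep : iIndepFun Yp ℙ := by
    have h := hindep.comp (fun _ => (Set.Ioi cp).indicator (fun _ => (1:ℝ)))
      (fun _ => measurable_const.indicator measurableSet_Ioi)
    exact h
  have hYmindep : iIndepFun Ym ℙ := by
    have h := hindep.comp (fun _ => (Set.Iio cm).indicator (fun _ => (1:ℝ)))
      (fun _ => measurable_const.indicator measurableSet_Iio)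
    exact h
  have h01p : ∀ i ω, Yp i ω = 0 ∨ Yp i ω = 1 := by
    intro i ω
    by_cases h : Z i ω ∈ Set.Ioi cp
    · right; rw [hYp]; simp only [Set.indicator_of_mem h]
    · left; rw [hYp]; simp only [Set.indicator_of_notMem h]
  have h01m : ∀ i ω, Ym i ω = 0 ∨ Ym i ω = 1 := by
    intro i ω
    by_cases h : Z i ω ∈ Set.Iio cm
    · right; rw [hYmdef]; simp only [Set.indicator_of_mem h]
    · left; rw [hYmdef]; simp only [Set.indicator_of_notMem h]
  -- means
  have hmeanp : ∀ i ∈ Good, ∫ ω, Yp i ω ∂ℙ ≤ 1/2 - G := by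
    intro i hi
    have hmi : m i = μ := by
      have := Finset.mem_filter.1 (hGoodDef ▸ hi)
      exact this.2
    have hind : (fun ω => Yp i ω)
        = Set.indicator ((Z i)⁻¹' (Set.Ioi cp)) (fun _ => (1:ℝ)) := by
      funext ω
      by_cases h : Z i ω ∈ Set.Ioi cp
      · rw [hYp]
        simp only [Set.indicator_of_mem h, Set.indicator_of_mem (Set.mem_preimage.2 h)]
      · rw [hYp]
        simp only [Set.indicator_of_notMem h,
          Set.indicator_of_notMem (fun hc => h (Set.mem_preimage.1 hc))]
    have hint : ∫ ω, Yp i ω ∂ℙ = (ℙ ((Z i)⁻¹' (Set.Ioi cp))).toReal := by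
      rw [show (fun ω => Yp i ω) = Yp i from rfl] at hind
      rw [hind]
      exact integral_indicator_one ((hmeas i) measurableSet_Ioi)
    rw [hint, ← Measure.map_apply (hmeas i) measurableSet_Ioi, hlaw i, hmi]
    exact (gauss_tails (Finset.le_sup hi) μ hG0 hGsmall hε).1
  have hmeanm : ∀ i ∈ Good, ∫ ω, Ym i ω ∂ℙ ≤ 1/2 - G := by
    intro i hi
    have hmi : m i = μ := by
      have := Finset.mem_filter.1 (hGoodDef ▸ hi)
      exact this.2
    have hind : (fun ω => Ym i ω)
        = Set.indicator ((Z i)⁻¹' (Set.Iio cm)) (fun _ => (1:ℝ)) := by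
      funext ω
      by_cases h : Z i ω ∈ Set.Iio cm
      · rw [hYmdef]
        simp only [Set.indicator_of_mem h, Set.indicator_of_mem (Set.mem_preimage.2 h)]
      · rw [hYmdef]
        simp only [Set.indicator_of_notMem h,
          Set.indicator_of_notMem (fun hc => h (Set.mem_preimage.1 hc))]
    have hint : ∫ ω, Ym i ω ∂ℙ = (ℙ ((Z i)⁻¹' (Set.Iio cm))).toReal := by
      rw [show (fun ω => Ym i ω) = Ym i from rfl] at hind
      rw [hind]
      exact integral_indicator_one ((hmeas i) measurableSet_Iio)
    rw [hint, ← Measure.map_apply (hmeas i) measurableSet_Iio, hlaw i, hmi]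
    exact (gauss_tails (Finset.le_sup hi) μ hG0 hGsmall hε).2
  -- Chernoff bounds
  have hp0 : (0:ℝ) ≤ 1/2 - G := by linarith
  have hp1 : (1:ℝ)/2 - G ≤ 1 := by linarith
  have hchp := chernoff01 Yp hYpm hYpindep h01p Good hGoodpos (1/2 - G) r hp0 hp1 hr0 hmeanp
  have hchm := chernoff01 Ym hYmm hYmindep h01m Good hGoodpos (1/2 - G) r hp0 hp1 hr0 hmeanm
  have hrexp : Real.exp (-2 * r ^ 2 / Good.card) ≤ Real.exp (-2 * δ) := by
    apply Real.exp_le_exp.2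
    have hD : (0:ℝ) < (Fintype.card ι : ℝ) - BB.card := by linarith
    rw [hrdef, mul_pow, Real.sq_sqrt (div_nonneg hδ hD.le), hGoodR]
    have heq : -2 * (((Fintype.card ι : ℝ) - BB.card)^2
        * (δ / ((Fintype.card ι : ℝ) - BB.card))) / ((Fintype.card ι : ℝ) - BB.card)
        = -2*δ := by
      field_simp
    linarith [heq]
  have hofReal : ∀ (S : Set Ω), (ℙ S).toReal ≤ Real.exp (-2 * r ^ 2 / Good.card)
      → ℙ S ≤ ENNReal.ofReal (Real.exp (-2*δ)) := by
    intro S hS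
    rw [← ENNReal.ofReal_toReal (measure_ne_top ℙ S)]
    exact ENNReal.ofReal_le_ofReal (hS.trans hrexp)
  have hPp := hofReal _ hchp
  have hPm := hofReal _ hchm
  -- inclusion of the bad event
  have hsub : {ω | |sampleMedian (fun ℓ => Z ℓ ω) - μ| ≤ t₀}ᶜ
      ⊆ {ω | ↑Good.card * (1/2 - G) + r ≤ ∑ i ∈ Good, Yp i ω}
        ∪ {ω | ↑Good.card * (1/2 - G) + r ≤ ∑ i ∈ Good, Ym i ω} := by
    intro ω hω
    simp only [Set.mem_compl_iff, Set.mem_setOf_eq, not_le] at hω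
    rcases lt_abs.1 hω with hmed | hmed
    · left
      have h1 : cp < listMedian (Finset.univ.val.toList.map (fun ℓ => Z ℓ ω)) := by
        have : cp < sampleMedian (fun ℓ => Z ℓ ω) := by rw [hcp]; linarith
        rwa [sampleMedian] at this
      have hcount := median_count_high h1
      rw [length_univ_list, countP_univ_list (fun ℓ => Z ℓ ω) (fun x => cp < x)] at hcount
      have hss : Finset.univ.filter (fun i => cp < Z i ω)
          ⊆ (Good.filter (fun i => cp < Z i ω)) ∪ BB := by
        intro j hj
        rw [Finset.mem_filter] at hj
        by_cases hmj : m j = μ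
        · exact Finset.mem_union_left _ (Finset.mem_filter.2
            ⟨hGoodDef ▸ Finset.mem_filter.2 ⟨Finset.mem_univ j, hmj⟩, hj.2⟩)
        · exact Finset.mem_union_right _ (hBB ▸ Finset.mem_filter.2 ⟨Finset.mem_univ j, hmj⟩)
      have hcard : (Finset.univ.filter (fun i => cp < Z i ω)).card
          ≤ (Good.filter (fun i => cp < Z i ω)).card + BB.card :=
        le_trans (Finset.card_le_card hss) (Finset.card_union_le _ _)
      have hsum : ∑ i ∈ Good, Yp i ω
          = ((Good.filter (fun i => cp < Z i ω)).card : ℝ) := by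
        rw [← Finset.sum_boole]
        apply Finset.sum_congr rfl
        intro i _
        rw [hYp]
        simp only [Set.indicator_apply, Set.mem_Ioi]
      rw [Set.mem_setOf_eq, hsum]
      have hc1 : (Fintype.card ι : ℝ)
          ≤ 2 * ((Good.filter (fun i => cp < Z i ω)).card + (BB.card:ℝ)) := by
        have : Fintype.card ι ≤ 2 * ((Good.filter (fun i => cp < Z i ω)).card + BB.card) := by
          omega
        exact_mod_cast this
      linarith
    · right
      have h1 : listMedian (Finset.univ.val.toList.map (fun ℓ => Z ℓ ω)) < cm := by
        have : sampleMedian (fun ℓ => Z ℓ ω) < cm := by rw [hcm]; linarith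
        rwa [sampleMedian] at this
      have hcount := median_count_low h1
      rw [length_univ_list, countP_univ_list (fun ℓ => Z ℓ ω) (fun x => x < cm)] at hcount
      have hss : Finset.univ.filter (fun i => Z i ω < cm)
          ⊆ (Good.filter (fun i => Z i ω < cm)) ∪ BB := by
        intro j hj
        rw [Finset.mem_filter] at hj
        by_cases hmj : m j = μ
        · exact Finset.mem_union_left _ (Finset.mem_filter.2
            ⟨hGoodDef ▸ Finset.mem_filter.2 ⟨Finset.mem_univ j, hmj⟩, hj.2⟩)
        · exact Finset.mem_union_right _ (hBB ▸ Finset.mem_filter.2 ⟨Finset.mem_univ j, hmj⟩)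
      have hcard : (Finset.univ.filter (fun i => Z i ω < cm)).card
          ≤ (Good.filter (fun i => Z i ω < cm)).card + BB.card :=
        le_trans (Finset.card_le_card hss) (Finset.card_union_le _ _)
      have hsum : ∑ i ∈ Good, Ym i ω
          = ((Good.filter (fun i => Z i ω < cm)).card : ℝ) := by
        rw [← Finset.sum_boole]
        apply Finset.sum_congr rfl
        intro i _
        rw [hYmdef]
        simp only [Set.indicator_apply, Set.mem_Iio]
      rw [Set.mem_setOf_eq, hsum]
      have hc1 : (Fintype.card ι : ℝ)
          ≤ 2 * ((Good.filter (fun i => Z i ω < cm)).card + (BB.card:ℝ)) := by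
        have : Fintype.card ι ≤ 2 * ((Good.filter (fun i => Z i ω < cm)).card + BB.card) := by
          omega
        exact_mod_cast this
      linarith
  -- final ENNReal arithmetic
  set A : Set Ω := {ω | |sampleMedian (fun ℓ => Z ℓ ω) - μ| ≤ t₀} with hA
  set β : ℝ := Real.exp (-2 * δ) with hβ
  have hβ0 : 0 ≤ β := le_of_lt (Real.exp_pos _)
  rcases le_or_gt (1 - 4 * β) 0 with hneg | hposb
  · rw [ENNReal.ofReal_of_nonpos hneg]
    positivity
  have hcompl : ℙ Aᶜ ≤ ENNReal.ofReal β + ENNReal.ofReal β :=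
    le_trans (measure_mono hsub) (le_trans (measure_union_le _ _) (add_le_add hPp hPm))
  have huniv : (1:ENNReal) ≤ ℙ A + ℙ Aᶜ := by
    have h1 : ℙ (A ∪ Aᶜ) ≤ ℙ A + ℙ Aᶜ := measure_union_le _ _
    rw [Set.union_compl_self, measure_univ] at h1
    exact h1
  have h1 : (1:ENNReal) ≤ ℙ A + (ENNReal.ofReal β + ENNReal.ofReal β) :=
    le_trans huniv (add_le_add_right hcompl _)
  have h2 : ENNReal.ofReal (1 - 4*β) + (ENNReal.ofReal β + ENNReal.ofReal β) ≤ 1 := by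
    rw [← ENNReal.ofReal_add hβ0 hβ0, ← ENNReal.ofReal_add (by linarith) (by linarith)]
    rw [show (1:ENNReal) = ENNReal.ofReal 1 by simp]
    apply ENNReal.ofReal_le_ofReal
    linarith
  have h3 : ENNReal.ofReal (1 - 4*β) + (ENNReal.ofReal β + ENNReal.ofReal β)
      ≤ ℙ A + (ENNReal.ofReal β + ENNReal.ofReal β) := le_trans h2 h1
  have hfin : (ENNReal.ofReal β + ENNReal.ofReal β) ≠ ⊤ := by
    simp [ENNReal.ofReal_ne_top]
  exact (ENNReal.add_le_add_iff_right hfin).1 h3
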